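/- For every n ≥ 0, the number of pentagon tiles in the n-th boat–star supertile generated from a single star equals (17+7√5)/22 · φ^{4n} − (40/33)·4ⁿ − 1/3 + (17−7√5)/22 · φ^{−4n}. Formally: with M the boat–star substitution matrix, u = (0,0,0,1,1,1)ᵀ, and e₁ the first standard basis vector, ⟨u, Mⁿ e₁⟩ equals the stated expression for all n ∈ ℕ. -/
import Mathlib


open Real Matrix

noncomputable def boatStarM : Matrix (Fin 6) (Fin 6) ℝ :=
  !![1,1,1,0,0,0;
     5,3,1,0,0,0;
     0,0,0,2,1,0;
     5,3,1,4,2,0;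
     0,0,0,1,3,5;
     0,0,0,1,1,1]

noncomputable def goldenφ : ℝ := (1 + Real.sqrt 5) / 2

/-! ### Auxiliary material -/

lemma cval0 (a b c d e f : ℝ) : (![a,b,c,d,e,f] : Fin 6 → ℝ) 0 = a := rfl
lemma cval1 (a b c d e f : ℝ) : (![a,b,c,d,e,f] : Fin 6 → ℝ) 1 = b := rfl
lemma cval2 (a b c d e f : ℝ) : (![a,b,c,d,e,f] : Fin 6 → ℝ) 2 = c := rfl
lemma cval3 (a b c d e f : ℝ) : (![a,b,c,d,e,f] : Fin 6 → ℝ) 3 = d := rfl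
lemma cval4 (a b c d e f : ℝ) : (![a,b,c,d,e,f] : Fin 6 → ℝ) 4 = e := rfl
lemma cval5 (a b c d e f : ℝ) : (![a,b,c,d,e,f] : Fin 6 → ℝ) 5 = f := rfl

noncomputable def fB (n : ℕ) : ℝ :=
  (![0, 0, 0, 1, 1, 1] : Fin 6 → ℝ) ⬝ᵥ
    (boatStarM ^ n).mulVec (fun i => if i = 0 then (1 : ℝ) else 0)

noncomputable def GB (n : ℕ) : ℝ :=
  (17 + 7 * Real.sqrt 5) / 22 * ((7 + 3 * Real.sqrt 5) / 2) ^ n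
    - 40 / 33 * 4 ^ n - 1 / 3
    + (17 - 7 * Real.sqrt 5) / 22 * ((7 - 3 * Real.sqrt 5) / 2) ^ n

lemma hs5 : Real.sqrt 5 ^ 2 = 5 := Real.sq_sqrt (by norm_num)

lemma hp4 : goldenφ ^ 4 = (7 + 3 * Real.sqrt 5) / 2 := by
  unfold goldenφ
  linear_combination ((Real.sqrt 5 ^ 2 + 4 * Real.sqrt 5 + 11) / 16) * hs5

lemma hp4inv : (goldenφ ^ 4)⁻¹ = (7 - 3 * Real.sqrt 5) / 2 := by
  have h1 : goldenφ ^ 4 * ((7 - 3 * Real.sqrt 5) / 2) = 1 := by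
    rw [hp4]; linear_combination (-(9 : ℝ) / 4) * hs5
  exact inv_eq_of_mul_eq_one_right h1

def c0B : Fin 6 → ℝ := ![1, 0, 0, 0, 0, 0]
def c1B : Fin 6 → ℝ := ![1, 5, 0, 5, 0, 0]
def c2B : Fin 6 → ℝ := ![6, 20, 10, 40, 5, 5]
def c3B : Fin 6 → ℝ := ![36, 100, 85, 270, 80, 50]
def c4B : Fin 6 → ℝ := ![221, 565, 620, 1805, 760, 400]

lemma e1_eq : (fun i => if i = 0 then (1 : ℝ) else 0) = c0B := by
  funext i; fin_cases i <;> rfl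

lemma step0 : boatStarM.mulVec c0B = c1B := by
  funext i; fin_cases i <;>
    norm_num [boatStarM, c0B, c1B, Matrix.mulVec, dotProduct, Fin.sum_univ_six,
      cval0, cval1, cval2, cval3, cval4, cval5]

lemma step1 : boatStarM.mulVec c1B = c2B := by
  funext i; fin_cases i <;>
    norm_num [boatStarM, c1B, c2B, Matrix.mulVec, dotProduct, Fin.sum_univ_six,
      cval0, cval1, cval2, cval3, cval4, cval5]

lemma step2 : boatStarM.mulVec c2B = c3B := by
  funext i; fin_cases i <;>
    norm_num [boatStarM, c2B, c3B, Matrix.mulVec, dotProduct, Fin.sum_univ_six,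
      cval0, cval1, cval2, cval3, cval4, cval5]

lemma step3 : boatStarM.mulVec c3B = c4B := by
  funext i; fin_cases i <;>
    norm_num [boatStarM, c3B, c4B, Matrix.mulVec, dotProduct, Fin.sum_univ_six,
      cval0, cval1, cval2, cval3, cval4, cval5]

lemma pe0 : (boatStarM ^ 0).mulVec (fun i => if i = 0 then (1 : ℝ) else 0) = c0B := by
  rw [pow_zero, Matrix.one_mulVec, e1_eq]

lemma pe1 : (boatStarM ^ 1).mulVec (fun i => if i = 0 then (1 : ℝ) else 0) = c1B := by
  rw [pow_one, e1_eq, step0]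

lemma pe2 : (boatStarM ^ 2).mulVec (fun i => if i = 0 then (1 : ℝ) else 0) = c2B := by
  rw [show (2 : ℕ) = 1 + 1 from rfl, pow_succ, ← Matrix.mulVec_mulVec, pow_one, e1_eq,
    step0, step1]

lemma pe3 : (boatStarM ^ 3).mulVec (fun i => if i = 0 then (1 : ℝ) else 0) = c3B := by
  rw [show (3 : ℕ) = 2 + 1 from rfl, pow_succ', ← Matrix.mulVec_mulVec, pe2, step2]

lemma pe4 : (boatStarM ^ 4).mulVec (fun i => if i = 0 then (1 : ℝ) else 0) = c4B := by
  rw [show (4 : ℕ) = 3 + 1 from rfl, pow_succ', ← Matrix.mulVec_mulVec, pe3, step3]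

lemma c_comb : c4B = (12 : ℝ) • c3B - (40 : ℝ) • c2B + (33 : ℝ) • c1B - (4 : ℝ) • c0B := by
  funext i
  fin_cases i <;>
    norm_num [c0B, c1B, c2B, c3B, c4B, Pi.smul_apply, Pi.sub_apply, Pi.add_apply,
      smul_eq_mul, cval0, cval1, cval2, cval3, cval4, cval5]

lemma fB_rec (n : ℕ) :
    fB (n + 4) = 12 * fB (n + 3) - 40 * fB (n + 2) + 33 * fB (n + 1) - 4 * fB n := by
  have key : ∀ m : ℕ, fB (n + m) = (![0, 0, 0, 1, 1, 1] : Fin 6 → ℝ) ⬝ᵥ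
      (boatStarM ^ n).mulVec ((boatStarM ^ m).mulVec
        (fun i => if i = 0 then (1 : ℝ) else 0)) := by
    intro m
    rw [fB, pow_add, ← Matrix.mulVec_mulVec]
  have k0 : fB n = (![0, 0, 0, 1, 1, 1] : Fin 6 → ℝ) ⬝ᵥ (boatStarM ^ n).mulVec c0B := by
    have := key 0
    rwa [Nat.add_zero, pe0] at this
  rw [key 4, key 3, key 2, key 1, k0, pe1, pe2, pe3, pe4, c_comb,
    Matrix.mulVec_sub, Matrix.mulVec_add, Matrix.mulVec_sub,
    Matrix.mulVec_smul, Matrix.mulVec_smul, Matrix.mulVec_smul, Matrix.mulVec_smul,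
    dotProduct_sub, dotProduct_add, dotProduct_sub,
    dotProduct_smul, dotProduct_smul, dotProduct_smul,
    dotProduct_smul]
  simp only [smul_eq_mul]

lemma GB_rec (n : ℕ) :
    GB (n + 4) = 12 * GB (n + 3) - 40 * GB (n + 2) + 33 * GB (n + 1) - 4 * GB n := by
  unfold GB
  linear_combination
    (((-765 + 1521 * Real.sqrt 5 + 2133 * Real.sqrt 5 ^ 2 + 567 * Real.sqrt 5 ^ 3) / 352) *
        ((7 + 3 * Real.sqrt 5) / 2) ^ n +
      ((-765 - 1521 * Real.sqrt 5 + 2133 * Real.sqrt 5 ^ 2 - 567 * Real.sqrt 5 ^ 3) / 352) *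
        ((7 - 3 * Real.sqrt 5) / 2) ^ n) * hs5

lemma fB0 : fB 0 = 0 := by
  rw [fB, pe0]
  norm_num [c0B, dotProduct, Fin.sum_univ_six, cval0, cval1, cval2, cval3, cval4, cval5]

lemma fB1 : fB 1 = 5 := by
  rw [fB, pe1]
  norm_num [c1B, dotProduct, Fin.sum_univ_six, cval0, cval1, cval2, cval3, cval4, cval5]

lemma fB2 : fB 2 = 50 := by
  rw [fB, pe2]
  norm_num [c2B, dotProduct, Fin.sum_univ_six, cval0, cval1, cval2, cval3, cval4, cval5]

lemma fB3 : fB 3 = 400 := by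
  rw [fB, pe3]
  norm_num [c3B, dotProduct, Fin.sum_univ_six, cval0, cval1, cval2, cval3, cval4, cval5]

lemma GB0 : GB 0 = 0 := by simp only [GB, pow_zero]; ring

lemma GB1 : GB 1 = 5 := by
  unfold GB; linear_combination ((21 : ℝ) / 22) * hs5

lemma GB2 : GB 2 = 50 := by
  unfold GB; linear_combination ((447 : ℝ) / 44) * hs5

lemma GB3 : GB 3 = 400 := by
  unfold GB
  linear_combination ((189 / 88 * Real.sqrt 5 ^ 2 + 7245 / 88 : ℝ)) * hs5

lemma fB_eq_GB (n : ℕ) : fB n = GB n := by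
  have H : ∀ m : ℕ, fB m = GB m ∧ fB (m + 1) = GB (m + 1) ∧ fB (m + 2) = GB (m + 2) ∧
      fB (m + 3) = GB (m + 3) := by
    intro m
    induction m with
    | zero => exact ⟨by rw [fB0, GB0], by rw [fB1, GB1], by rw [fB2, GB2], by rw [fB3, GB3]⟩
    | succ k ih =>
      obtain ⟨h0, h1, h2, h3⟩ := ih
      refine ⟨h1, h2, h3, ?_⟩
      show fB (k + 4) = GB (k + 4)
      rw [fB_rec, GB_rec, h0, h1, h2, h3]
  exact (H n).1

theorem boatStar_pentagon_count (n : ℕ) :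
    (![0, 0, 0, 1, 1, 1] : Fin 6 → ℝ) ⬝ᵥ
        (boatStarM ^ n).mulVec (fun i => if i = 0 then (1 : ℝ) else 0) =
      (17 + 7 * Real.sqrt 5) / 22 * goldenφ ^ (4 * n)
        - 40 / 33 * 4 ^ n - 1 / 3
        + (17 - 7 * Real.sqrt 5) / 22 * (goldenφ ^ (4 * n))⁻¹ := by
  have h1 : goldenφ ^ (4 * n) = ((7 + 3 * Real.sqrt 5) / 2) ^ n := by
    rw [pow_mul, hp4]
  have h2 : (goldenφ ^ (4 * n))⁻¹ = ((7 - 3 * Real.sqrt 5) / 2) ^ n := by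
    rw [pow_mul, ← inv_pow, hp4inv]
  rw [h2, h1]
  exact fB_eq_GB n
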